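/- Let λ_0 ∈ (0, 1) and let F, G be the maximal solution of the planar ODE system F' = −F² − G, G' = F(1 − 2G) with initial data F(0) = 0, G(0) = λ_0/2. Set C = 1/(λ_0 − 1) − ln((1 − λ_0)/2). Then e^{−C−1} ≥ 1/2 and the supremum of F(t)² over the trajectory equals e^{−C−1} − 1/2; that is, the maximal value F₊ of |F| is F₊ = (1/2)√(4 e^{−C−1} − 2). -/

import Mathlib

open Real Set Filter Topology

set_option maxHeartbeats 1600000 in
/-- For the plane radially symmetric system `F' = −F² − G`, `G' = F(1 − 2G)`
with initial data `F(0) = 0`, `G(0) = λ₀/2`, `λ₀ ∈ (0, 1)` (the maximal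
solution is then global), setting `C = 1/(λ₀ − 1) − ln((1 − λ₀)/2)`, one has
`e^{−C−1} ≥ 1/2`, the supremum of `F(t)²` over the trajectory equals
`e^{−C−1} − 1/2`, and the maximal value of `|F|` is
`F₊ = (1/2)√(4 e^{−C−1} − 2)`. -/
theorem laser_pulse_F_plus (lam₀ : ℝ) (h0 : 0 < lam₀) (h1 : lam₀ < 1)
    (F G : ℝ → ℝ) (hF0 : F 0 = 0) (hG0 : G 0 = lam₀ / 2)
    (hsol : ∀ t : ℝ, 0 ≤ t →
      HasDerivAt F (-(F t) ^ 2 - G t) t ∧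
      HasDerivAt G (F t * (1 - 2 * G t)) t)
    (C : ℝ) (hC : C = 1 / (lam₀ - 1) - Real.log ((1 - lam₀) / 2)) :
    1 / 2 ≤ Real.exp (-C - 1) ∧
    IsLUB {y : ℝ | ∃ t : ℝ, 0 ≤ t ∧ y = (F t) ^ 2} (Real.exp (-C - 1) - 1 / 2) ∧
    IsLUB {y : ℝ | ∃ t : ℝ, 0 ≤ t ∧ y = |F t|}
      ((1 / 2) * Real.sqrt (4 * Real.exp (-C - 1) - 2)) := by
  set s : ℝ := 1 - lam₀ with hs_def
  have hs0 : 0 < s := by simp [hs_def]; linarith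
  have hs1 : s < 1 := by simp [hs_def]; linarith
  have hCs : C = 1 / (lam₀ - 1) - Real.log (s / 2) := hC
  set C₂ : ℝ := 1 / s + Real.log s with hC2_def
  have hC2 : -C = C₂ - Real.log 2 := by
    have hlog : Real.log ((1 - lam₀) / 2) = Real.log s - Real.log 2 := by
      rw [← hs_def, Real.log_div (ne_of_gt hs0) (by norm_num)]
    have hinv : 1 / (lam₀ - 1) = -(1 / s) := by
      have hne : lam₀ - 1 ≠ 0 := ne_of_lt (by linarith)
      rw [hs_def]; field_simp
      rw [show lam₀ - 1 = -(1 - lam₀) by ring, neg_div, neg_neg, div_self (sub_ne_zero.mpr (ne_of_gt h1))]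
    rw [hC, hlog, hinv, hC2_def]; ring
  clear_value C₂
  -- the "first integral" machinery
  set u : ℝ → ℝ := fun t => 1 - 2 * G t with hu_def
  have hu0 : u 0 = s := by simp [hu_def, hG0, hs_def]; ring
  have hu' : ∀ t, 0 ≤ t → HasDerivAt u (-2 * F t * u t) t := by
    intro t ht
    have h := ((hsol t ht).2.const_mul (2:ℝ)).const_sub 1
    refine h.congr_deriv ?_
    simp only [hu_def]; ring
  set E : ℝ → ℝ := fun t => 2 * F t ^ 2 + u t * Real.log (u t) - C₂ * u t + 1
    with hE_def
  have hE0 : E 0 = 0 := by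
    simp only [hE_def, hu0, hF0, hC2_def]
    field_simp
    ring
  have hGu : ∀ t, G t = (1 - u t) / 2 := by intro t; simp [hu_def]
  have hE' : ∀ t, 0 ≤ t → 0 < u t → HasDerivAt E (-2 * F t * E t) t := by
    intro t ht hpos
    have hF' := (hsol t ht).1
    have hu't := hu' t ht
    have hlog : HasDerivAt (fun x => Real.log (u x)) ((u t)⁻¹ * (-2 * F t * u t)) t :=
      (Real.hasDerivAt_log (ne_of_gt hpos)).comp t hu't
    have hsq : HasDerivAt (fun x => F x ^ 2) (2 * F t ^ 1 * (-(F t) ^ 2 - G t)) t :=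
      hF'.pow 2
    have h := (((hsq.const_mul 2).add (hu't.mul hlog)).sub (hu't.const_mul C₂)).add_const 1
    refine h.congr_deriv ?_
    have hGt := hGu t
    field_simp [hE_def]
    ring_nf
    rw [hGt]; simp only [hE_def]; ring
  have hcontu : ∀ t, 0 ≤ t → ContinuousAt u t := fun t ht => (hu' t ht).continuousAt
  have hcontF : ∀ t, 0 ≤ t → ContinuousAt F t := fun t ht => (hsol t ht).1.continuousAt
  -- E vanishes as long as u stays positive
  have hEzero_aux : ∀ b, 0 ≤ b → (∀ x ∈ Icc 0 b, 0 < u x) → E b = 0 := by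
    intro b hb hpos
    set Q : ℝ → ℝ := fun t => E t / u t with hQ_def
    have hQ' : ∀ x ∈ Icc 0 b, HasDerivAt Q 0 x := by
      intro x hx
      have hux := hpos x hx
      have h := (hE' x hx.1 hux).div (hu' x hx.1) (ne_of_gt hux)
      refine h.congr_deriv ?_
      rw [div_eq_zero_iff]
      left; ring
    have hQcont : ContinuousOn Q (Icc 0 b) := fun x hx =>
      ((hQ' x hx).continuousAt).continuousWithinAt
    have hQd : ∀ x ∈ Ico 0 b, HasDerivWithinAt Q 0 (Ici x) x := fun x hx =>
      ((hQ' x (Ico_subset_Icc_self hx)).hasDerivWithinAt)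
    have hconst := constant_of_has_deriv_right_zero hQcont hQd b (right_mem_Icc.mpr hb)
    have hQ0 : Q 0 = 0 := by simp [hQ_def, hE0]
    rw [hQ0] at hconst
    have hub := hpos b (right_mem_Icc.mpr hb)
    have := div_eq_zero_iff.mp hconst
    rcases this with h | h
    · exact h
    · exact absurd h (ne_of_gt hub)
  -- u stays positive
  have hupos : ∀ t, 0 ≤ t → 0 < u t := by
    by_contra hcon
    push_neg at hcon
    obtain ⟨t', ht'0, ht'⟩ := hcon
    set B : Set ℝ := {t : ℝ | 0 ≤ t ∧ u t ≤ 0} with hB_def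
    have hBne : B.Nonempty := ⟨t', ht'0, ht'⟩
    have hBbd : BddBelow B := ⟨0, fun x hx => hx.1⟩
    set t₁ : ℝ := sInf B with ht₁_def
    have ht₁0 : 0 ≤ t₁ := le_csInf hBne fun x hx => hx.1
    have hut₁ : u t₁ ≤ 0 := by
      by_contra hp
      push_neg at hp
      have hev : ∀ᶠ x in 𝓝 t₁, 0 < u x := (hcontu t₁ ht₁0).eventually (eventually_gt_nhds hp)
      rw [Metric.eventually_nhds_iff] at hev
      obtain ⟨ε, hε, hball⟩ := hev
      obtain ⟨z, hz, hzlt⟩ := exists_lt_of_csInf_lt hBne (show sInf B < t₁ + ε by linarith)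
      have hz1 : t₁ ≤ z := csInf_le hBbd hz
      have : 0 < u z := hball (show dist z t₁ < ε by rw [Real.dist_eq, abs_of_nonneg (by linarith)]; linarith)
      exact absurd hz.2 (not_le.mpr this)
    have hlt : ∀ x, 0 ≤ x → x < t₁ → 0 < u x := by
      intro x hx0 hx
      by_contra hxc
      push_neg at hxc
      exact absurd (csInf_le hBbd ⟨hx0, hxc⟩) (not_le.mpr hx)
    have ht₁pos : 0 < t₁ := by
      rcases lt_or_eq_of_le ht₁0 with h | h
      · exact h
      · rw [← h, hu0] at hut₁; linarith
    -- pick a small positive value v attained by u before t₁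
    obtain ⟨v, hv0, hvs, hsv, hCv⟩ :
        ∃ v : ℝ, 0 < v ∧ v ≤ s ∧ Real.sqrt v ≤ 1/4 ∧ C₂ * v ≤ 1/4 := by
      have habs : 0 < 4 * (|C₂| + 1) := by positivity
      refine ⟨min s (min (1/16 : ℝ) (1 / (4 * (|C₂| + 1)))), ?_, min_le_left _ _, ?_, ?_⟩
      · exact lt_min hs0 (lt_min (by norm_num) (by positivity))
      · have hv16 : min s (min (1/16 : ℝ) (1 / (4 * (|C₂| + 1)))) ≤ 1/16 :=
          le_trans (min_le_right _ _) (min_le_left _ _)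
        have h14 : Real.sqrt (1/16 : ℝ) = 1/4 := by
          rw [show (1/16 : ℝ) = (1/4)^2 by norm_num, Real.sqrt_sq (by norm_num)]
        calc Real.sqrt _ ≤ Real.sqrt (1/16) := Real.sqrt_le_sqrt hv16
          _ = 1/4 := h14
      · have hvC : min s (min (1/16 : ℝ) (1 / (4 * (|C₂| + 1)))) ≤ 1 / (4 * (|C₂| + 1)) :=
          le_trans (min_le_right _ _) (min_le_right _ _)
        have hvpos : (0:ℝ) < min s (min (1/16 : ℝ) (1 / (4 * (|C₂| + 1)))) :=
          lt_min hs0 (lt_min (by norm_num) (by positivity))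
        have h3 : C₂ * min s (min (1/16 : ℝ) (1 / (4 * (|C₂| + 1)))) ≤
            |C₂| * min s (min (1/16 : ℝ) (1 / (4 * (|C₂| + 1)))) :=
          mul_le_mul_of_nonneg_right (le_abs_self C₂) (le_of_lt hvpos)
        have h4 : |C₂| * min s (min (1/16 : ℝ) (1 / (4 * (|C₂| + 1)))) ≤
            |C₂| * (1 / (4 * (|C₂| + 1))) :=
          mul_le_mul_of_nonneg_left hvC (abs_nonneg C₂)
        have h5 : |C₂| * (1 / (4 * (|C₂| + 1))) ≤ 1/4 := by
          rw [mul_one_div, div_le_div_iff₀ habs (by norm_num)]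
          nlinarith [abs_nonneg C₂]
        linarith
    have hcontOn : ContinuousOn u (Icc 0 t₁) := fun x hx => (hcontu x hx.1).continuousWithinAt
    have hmem : v ∈ Icc (u t₁) (u 0) := ⟨by linarith, by rw [hu0]; exact hvs⟩
    obtain ⟨t, htmem, htv⟩ := intermediate_value_Icc' ht₁0 hcontOn hmem
    have htlt : t < t₁ := by
      rcases lt_or_eq_of_le htmem.2 with h | h
      · exact h
      · exfalso; rw [← h, htv] at hut₁; linarith
    have hEt : E t = 0 := hEzero_aux t htmem.1 fun x hx =>
      hlt x hx.1 (lt_of_le_of_lt hx.2 htlt)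
    have hform : 2 * F t ^ 2 = C₂ * v - v * Real.log v - 1 := by
      simp only [hE_def, htv] at hEt; linarith
    have hlogbd : - (v * Real.log v) ≤ 2 * Real.sqrt v - 2 * v := by
      have h2 : Real.log (Real.sqrt v)⁻¹ ≤ (Real.sqrt v)⁻¹ - 1 :=
        Real.log_le_sub_one_of_pos (by positivity)
      rw [Real.log_inv, Real.log_sqrt (le_of_lt hv0)] at h2
      have hsv0 : 0 < Real.sqrt v := Real.sqrt_pos.mpr hv0
      have hveq : Real.sqrt v * Real.sqrt v = v := Real.mul_self_sqrt (le_of_lt hv0)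
      have hinv : v * (Real.sqrt v)⁻¹ = Real.sqrt v := by
        rw [← hveq]; field_simp
        rw [Real.sqrt_sq hsv0.le]
      nlinarith [mul_le_mul_of_nonneg_left h2 (le_of_lt hv0)]
    linarith [sq_nonneg (F t), hv0, hsv, hCv, hlogbd, hform]
  have hEall : ∀ t, 0 ≤ t → E t = 0 := fun t ht =>
    hEzero_aux t ht fun x hx => hupos x hx.1
  have hformula : ∀ t, 0 ≤ t →
      2 * F t ^ 2 = u t * (C₂ - Real.log (u t)) - 1 := by
    intro t ht
    have := hEall t ht
    simp only [hE_def] at this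
    nlinarith [this]
  have hC2ge1 : 1 ≤ C₂ := by
    have hlog : Real.log s⁻¹ ≤ s⁻¹ - 1 := Real.log_le_sub_one_of_pos (by positivity)
    rw [Real.log_inv] at hlog
    rw [hC2_def, one_div]
    linarith
  set ustar : ℝ := Real.exp (C₂ - 1) with hustar_def
  clear_value ustar
  have hustar_pos : 0 < ustar := hustar_def ▸ Real.exp_pos _
  have hustar1 : 1 ≤ ustar := by
    rw [hustar_def]
    calc (1:ℝ) = Real.exp 0 := (Real.exp_zero).symm
      _ ≤ Real.exp (C₂ - 1) := Real.exp_le_exp.mpr (by linarith)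
  have hlog_ustar : Real.log ustar = C₂ - 1 := by rw [hustar_def, Real.log_exp]
  have hexpC : Real.exp (-C - 1) = ustar / 2 := by
    rw [show -C - 1 = (C₂ - 1) - Real.log 2 by linarith [hC2],
      Real.exp_sub, Real.exp_log (by norm_num : (0:ℝ) < 2), hustar_def]
  -- global upper bound
  have hub2 : ∀ t, 0 ≤ t → 2 * F t ^ 2 ≤ ustar - 1 := by
    intro t ht
    have hut := hupos t ht
    have h1 : C₂ - Real.log (u t) ≤ Real.exp (C₂ - Real.log (u t) - 1) := by
      have := Real.add_one_le_exp (C₂ - Real.log (u t) - 1)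
      linarith
    have h2 : Real.exp (C₂ - Real.log (u t) - 1) = ustar / u t := by
      rw [show C₂ - Real.log (u t) - 1 = (C₂ - 1) - Real.log (u t) by ring,
        Real.exp_sub, Real.exp_log hut, hustar_def]
    have h3 : u t * (C₂ - Real.log (u t)) ≤ ustar := by
      calc u t * (C₂ - Real.log (u t)) ≤ u t * (ustar / u t) := by
            rw [← h2] at *
            exact mul_le_mul_of_nonneg_left h1 (le_of_lt hut)
        _ = ustar := by field_simp
    linarith [hformula t ht]
  -- strict monotonicity of x ↦ x (C₂ - log x) on [s, ustar]
  have hs_lt_ustar : s < ustar := by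
    have h1 : Real.log s < C₂ - 1 := by
      have : (1:ℝ) < 1 / s := one_lt_one_div hs0 hs1
      rw [hC2_def]; linarith
    calc s = Real.exp (Real.log s) := (Real.exp_log hs0).symm
      _ < ustar := by rw [hustar_def]; exact Real.exp_lt_exp.mpr h1
  have hs_val : s * (C₂ - Real.log s) = 1 := by
    rw [hC2_def]; field_simp; ring
  have h_fun_mono : StrictMonoOn (fun x => x * (C₂ - Real.log x)) (Icc s ustar) := by
    apply strictMonoOn_of_deriv_pos (convex_Icc s ustar)
    · apply ContinuousOn.mul continuousOn_id
      apply ContinuousOn.sub continuousOn_const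
      apply Real.continuousOn_log.mono
      intro x hx
      exact ne_of_gt (lt_of_lt_of_le hs0 hx.1)
    · intro x hx
      rw [interior_Icc] at hx
      have hx0 : 0 < x := lt_trans hs0 hx.1
      have hder : HasDerivAt (fun x : ℝ => x * (C₂ - Real.log x))
          (C₂ - Real.log x - 1) x := by
        have h := (hasDerivAt_id x).mul ((Real.hasDerivAt_log (ne_of_gt hx0)).const_sub C₂)
        refine h.congr_deriv ?_
        rw [id_eq]
        field_simp; ring
      rw [hder.deriv]
      have : Real.log x < C₂ - 1 := by
        rw [← hlog_ustar]
        exact Real.log_lt_log hx0 hx.2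
      linarith
  -- F is negative just after 0
  have hFneg_small : ∃ ε > 0, ∀ t, 0 < t → t < ε → F t < 0 := by
    have hd : HasDerivAt F (-(lam₀ / 2)) 0 := by
      have h := (hsol 0 le_rfl).1
      rw [hF0, hG0] at h
      convert h using 1; ring
    rw [hasDerivAt_iff_tendsto_slope] at hd
    have hev : ∀ᶠ x in 𝓝[≠] (0:ℝ), slope F 0 x < 0 :=
      hd.eventually_lt_const (by linarith)
    rw [eventually_nhdsWithin_iff, Metric.eventually_nhds_iff] at hev
    obtain ⟨ε, hε, hball⟩ := hev
    refine ⟨ε, hε, fun t ht0 htε => ?_⟩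
    have hslope := hball (show dist t 0 < ε by
      rw [Real.dist_eq, sub_zero, abs_of_pos ht0]; exact htε) (ne_of_gt ht0)
    rw [slope_def_field, hF0] at hslope
    have : (F t - 0) / (t - 0) < 0 := hslope
    rw [sub_zero, sub_zero, div_neg_iff] at this
    rcases this with ⟨h, h'⟩ | ⟨h, h'⟩
    · linarith
    · exact h
  -- u reaches ustar
  have hreach : ∃ t, 0 ≤ t ∧ ustar ≤ u t := by
    by_contra hcon
    push_neg at hcon
    -- F stays negative for positive times
    have hFneg : ∀ t, 0 < t → F t < 0 := by
      by_contra hc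
      push_neg at hc
      obtain ⟨t', ht'0, ht'⟩ := hc
      set Z : Set ℝ := {t : ℝ | 0 < t ∧ 0 ≤ F t} with hZ_def
      have hZne : Z.Nonempty := ⟨t', ht'0, ht'⟩
      have hZbd : BddBelow Z := ⟨0, fun x hx => le_of_lt hx.1⟩
      obtain ⟨ε, hε, hsmall⟩ := hFneg_small
      set t₂ : ℝ := sInf Z with ht₂_def
      have ht₂ε : ε ≤ t₂ := by
        apply le_csInf hZne
        intro x hx
        by_contra hxe
        push_neg at hxe
        exact absurd hx.2 (not_le.mpr (hsmall x hx.1 hxe))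
      have ht₂pos : 0 < t₂ := lt_of_lt_of_le hε ht₂ε
      have hF_lt : ∀ x, 0 < x → x < t₂ → F x < 0 := by
        intro x hx0 hx
        by_contra hxc
        push_neg at hxc
        exact absurd (csInf_le hZbd ⟨hx0, hxc⟩) (not_le.mpr hx)
      have hFt₂_ge : 0 ≤ F t₂ := by
        by_contra hp
        push_neg at hp
        have hev : ∀ᶠ x in 𝓝 t₂, F x < 0 :=
          (hcontF t₂ (le_of_lt ht₂pos)).eventually_lt_const hp
        rw [Metric.eventually_nhds_iff] at hev
        obtain ⟨δ, hδ, hball⟩ := hev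
        obtain ⟨z, hz, hzlt⟩ := exists_lt_of_csInf_lt hZne (show sInf Z < t₂ + δ by linarith)
        have hz1 : t₂ ≤ z := csInf_le hZbd hz
        have : F z < 0 := hball (show dist z t₂ < δ by
          rw [Real.dist_eq, abs_of_nonneg (by linarith)]; linarith)
        exact absurd hz.2 (not_le.mpr this)
      have hFt₂_le : F t₂ ≤ 0 := by
        have htend : Filter.Tendsto F (𝓝[<] t₂) (𝓝 (F t₂)) :=
          ((hcontF t₂ (le_of_lt ht₂pos)).continuousWithinAt)
        apply le_of_tendsto htend
        filter_upwards [Ioo_mem_nhdsLT ht₂pos]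
        intro x hx
        exact le_of_lt (hF_lt x hx.1 hx.2)
      have hFt₂ : F t₂ = 0 := le_antisymm hFt₂_le hFt₂_ge
      -- u strictly increasing on [0, t₂]
      have hmono : StrictMonoOn u (Icc 0 t₂) := by
        apply strictMonoOn_of_deriv_pos (convex_Icc 0 t₂)
        · exact fun x hx => (hcontu x hx.1).continuousWithinAt
        · intro x hx
          rw [interior_Icc] at hx
          rw [(hu' x (le_of_lt hx.1)).deriv]
          have hux := hupos x (le_of_lt hx.1)
          have hFx := hF_lt x hx.1 hx.2
          nlinarith
      have hsu : s < u t₂ := by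
        rw [← hu0]
        exact hmono ⟨le_rfl, le_of_lt ht₂pos⟩ ⟨le_of_lt ht₂pos, le_rfl⟩ ht₂pos
      have h1 : u t₂ * (C₂ - Real.log (u t₂)) = 1 := by
        have := hformula t₂ (le_of_lt ht₂pos)
        rw [hFt₂] at this
        nlinarith [this]
      have h2 : s * (C₂ - Real.log s) < u t₂ * (C₂ - Real.log (u t₂)) :=
        h_fun_mono ⟨le_rfl, le_of_lt hs_lt_ustar⟩
          ⟨le_of_lt hsu, le_of_lt (hcon t₂ (le_of_lt ht₂pos))⟩ hsu
      rw [hs_val, h1] at h2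
      exact lt_irrefl 1 h2
    -- u is strictly increasing on every [0, T]
    have humono : ∀ T, 0 < T → StrictMonoOn u (Icc 0 T) := by
      intro T hT
      apply strictMonoOn_of_deriv_pos (convex_Icc 0 T)
      · exact fun x hx => (hcontu x hx.1).continuousWithinAt
      · intro x hx
        rw [interior_Icc] at hx
        rw [(hu' x (le_of_lt hx.1)).deriv]
        have hux := hupos x (le_of_lt hx.1)
        have hFx := hFneg x hx.1
        nlinarith
    have hu1s : s < u 1 := by
      rw [← hu0]
      exact humono 1 one_pos ⟨le_rfl, zero_le_one⟩ ⟨zero_le_one, le_rfl⟩ one_pos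
    have hu1star : u 1 < ustar := hcon 1 zero_le_one
    have hu1pos : 0 < u 1 := hupos 1 zero_le_one
    have humon_le : ∀ t, 1 ≤ t → u 1 ≤ u t := by
      intro t ht
      rcases eq_or_lt_of_le ht with h | h
      · rw [← h]
      · exact le_of_lt
          (humono t (by linarith) ⟨zero_le_one, ht⟩ ⟨by linarith, le_rfl⟩ h)
    set c : ℝ := u 1 * (C₂ - Real.log (u 1)) - 1 with hc_def
    have hc_pos : 0 < c := by
      have h2 : s * (C₂ - Real.log s) < u 1 * (C₂ - Real.log (u 1)) :=
        h_fun_mono ⟨le_rfl, le_of_lt hs_lt_ustar⟩ ⟨le_of_lt hu1s, le_of_lt hu1star⟩ hu1s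
      rw [hs_val] at h2
      rw [hc_def]; linarith
    have hF2 : ∀ t, 1 ≤ t → c ≤ 2 * F t ^ 2 := by
      intro t ht
      have ht0 : (0:ℝ) ≤ t := by linarith
      have hut := humon_le t ht
      have hutstar := hcon t ht0
      have hmono2 : u 1 * (C₂ - Real.log (u 1)) ≤ u t * (C₂ - Real.log (u t)) :=
        h_fun_mono.monotoneOn ⟨le_of_lt hu1s, le_of_lt hu1star⟩
          ⟨le_trans (le_of_lt hu1s) hut, le_of_lt hutstar⟩ hut
      rw [hc_def]
      linarith [hformula t ht0]
    set r : ℝ := Real.sqrt (c / 2) with hr_def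
    have hr0 : 0 < r := Real.sqrt_pos.mpr (by linarith)
    have hFr : ∀ t, 1 ≤ t → F t ≤ -r := by
      intro t ht
      have hF2t := hF2 t ht
      have hFn : F t < 0 := hFneg t (by linarith)
      have h1 : r ≤ -F t := by
        rw [hr_def]
        have h2 : Real.sqrt (c/2) ≤ Real.sqrt ((-F t)^2) :=
          Real.sqrt_le_sqrt (by nlinarith)
        rwa [Real.sqrt_sq (by linarith)] at h2
      linarith
    set κ : ℝ := 2 * r * u 1 with hκ_def
    have hκ0 : 0 < κ := by rw [hκ_def]; positivity
    have hgrow : ∀ T, 1 ≤ T → u 1 + κ * (T - 1) ≤ u T := by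
      intro T hT
      set w : ℝ → ℝ := fun t => u t - κ * t with hw_def
      have hw' : ∀ x, 1 ≤ x → HasDerivAt w (-2 * F x * u x - κ * 1) x := by
        intro x hx
        exact (hu' x (by linarith)).sub ((hasDerivAt_id x).const_mul κ)
      have hwmono : MonotoneOn w (Icc 1 T) := by
        apply monotoneOn_of_deriv_nonneg (convex_Icc 1 T)
        · exact fun x hx => (hw' x hx.1).continuousAt.continuousWithinAt
        · intro x hx
          rw [interior_Icc] at hx
          exact (hw' x (le_of_lt hx.1)).differentiableAt.differentiableWithinAt
        · intro x hx
          rw [interior_Icc] at hx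
          rw [(hw' x (le_of_lt hx.1)).deriv]
          have h1 := hFr x (le_of_lt hx.1)
          have h2 := humon_le x (le_of_lt hx.1)
          rw [hκ_def]
          nlinarith
      have := hwmono ⟨le_rfl, hT⟩ ⟨hT, le_rfl⟩ hT
      simp only [hw_def] at this
      linarith
    have hT1 : (1:ℝ) ≤ 1 + ustar / κ := by
      have := div_pos hustar_pos hκ0; linarith
    have hcontra := hgrow (1 + ustar / κ) hT1
    have hκustar : κ * (1 + ustar / κ - 1) = ustar := by
      field_simp
      ring
    rw [hκustar] at hcontra
    have hlast := hcon (1 + ustar / κ) (by linarith)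
    linarith [hcontra.trans_lt hlast]
  -- the maximum is attained
  obtain ⟨t₃, ht₃0, hu3⟩ := hreach
  have hcontOn3 : ContinuousOn u (Icc 0 t₃) := fun x hx => (hcontu x hx.1).continuousWithinAt
  have hmem3 : ustar ∈ Icc (u 0) (u t₃) := ⟨by rw [hu0]; exact le_of_lt hs_lt_ustar, hu3⟩
  obtain ⟨tstar, hts_mem, hts⟩ := intermediate_value_Icc ht₃0 hcontOn3 hmem3
  have hFstar : 2 * F tstar ^ 2 = ustar - 1 := by
    have h := hformula tstar hts_mem.1
    rw [hts, hlog_ustar] at h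
    rw [h]; ring
  refine ⟨?_, ?_, ?_⟩
  · rw [hexpC]; linarith
  · apply IsGreatest.isLUB
    constructor
    · exact ⟨tstar, hts_mem.1, by rw [hexpC]; linarith⟩
    · rintro y ⟨t, ht, rfl⟩
      rw [hexpC]
      linarith [hub2 t ht]
  · have hM0 : (0:ℝ) ≤ 4 * Real.exp (-C - 1) - 2 := by rw [hexpC]; linarith
    set M : ℝ := 1 / 2 * Real.sqrt (4 * Real.exp (-C - 1) - 2) with hM_def
    have hMnn : 0 ≤ M := by rw [hM_def]; positivity
    have hM2 : M ^ 2 = Real.exp (-C - 1) - 1 / 2 := by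
      rw [hM_def, mul_pow, Real.sq_sqrt hM0]; ring
    apply IsGreatest.isLUB
    constructor
    · refine ⟨tstar, hts_mem.1, ?_⟩
      have h1 : F tstar ^ 2 = M ^ 2 := by rw [hM2, hexpC]; linarith
      have h2 : |F tstar| = M := by
        rw [← Real.sqrt_sq_eq_abs, h1, Real.sqrt_sq hMnn]
      exact h2.symm
    · rintro y ⟨t, ht, rfl⟩
      have h2 : F t ^ 2 ≤ M ^ 2 := by rw [hM2, hexpC]; linarith [hub2 t ht]
      calc |F t| = Real.sqrt (F t ^ 2) := (Real.sqrt_sq_eq_abs _).symm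
        _ ≤ Real.sqrt (M ^ 2) := Real.sqrt_le_sqrt h2
        _ = M := Real.sqrt_sq hMnn
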